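/- Let q, d ≥ 2 be integers, and suppose that the density δ(q, d; s) exists for every s ∈ ℤ^5. Then δ(q, d; s) is a rational number for every s ∈ ℤ^5. -/

import Mathlib

open Filter Finset

/-- `vq q n` is the `q`-adic valuation: `0` if `n = 0`, and otherwise the
largest `k` such that `q ^ k` divides `n`. -/
noncomputable def vq (q n : ℕ) : ℕ := if n = 0 then 0 else sSup {k : ℕ | q ^ k ∣ n}

/-- `wq q n = ∑_{i=0}^n vq q i`. -/
noncomputable def wq (q n : ℕ) : ℕ := ∑ i ∈ Finset.range (n + 1), vq q i

/-- `uq q n = ∑_{i=0}^n wq q i`. -/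
noncomputable def uq (q n : ℕ) : ℕ := ∑ i ∈ Finset.range (n + 1), wq q i

/-- `gamma q d tu tw t2 t1 t0 A` is the number of `n < A` with
`tu·u_q(n) + tw·w_q(n) + t2·n(n+1)/2 + t1·n + t0 ≡ 0 (mod d)`. -/
noncomputable def gamma (q d : ℕ) (tu tw t2 t1 t0 : ℤ) (A : ℕ) : ℕ :=
  ((Finset.range A).filter fun n =>
    (tu * uq q n + tw * wq q n + t2 * (n * (n + 1) / 2 : ℕ) + t1 * n + t0) % (d : ℤ) = 0).card


section aux
variable {q : ℕ}

lemma vq_unique (hq : 2 ≤ q) {n v : ℕ} (hn : n ≠ 0) (h1 : q ^ v ∣ n) (h2 : ¬ q ^ (v+1) ∣ n) :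
    vq q n = v := by
  have hb : BddAbove {k : ℕ | q ^ k ∣ n} := by
    refine ⟨n, fun k hk => ?_⟩
    have hkn : q ^ k ≤ n := Nat.le_of_dvd (Nat.pos_of_ne_zero hn) hk
    calc k ≤ 2 ^ k := Nat.le_of_lt (Nat.lt_two_pow_self (n := k))
    _ ≤ q ^ k := Nat.pow_le_pow_left hq k
    _ ≤ n := hkn
  rw [vq, if_neg hn]
  apply le_antisymm
  · by_contra hlt
    push_neg at hlt
    have hmem : sSup {k : ℕ | q ^ k ∣ n} ∈ {k : ℕ | q ^ k ∣ n} :=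
      Nat.sSup_mem ⟨v, h1⟩ hb
    exact h2 (dvd_trans (pow_dvd_pow q hlt) hmem)
  · exact le_csSup hb h1

lemma vq_zero_of_not_dvd (hq : 2 ≤ q) {n : ℕ} (hn : n ≠ 0) (h : ¬ q ∣ n) : vq q n = 0 := by
  apply vq_unique hq hn (by simp)
  simpa using h

lemma vq_spec (hq : 2 ≤ q) {n : ℕ} (hn : n ≠ 0) :
    q ^ (vq q n) ∣ n ∧ ¬ q ^ (vq q n + 1) ∣ n := by
  have hb : BddAbove {k : ℕ | q ^ k ∣ n} := by
    refine ⟨n, fun k hk => ?_⟩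
    have hkn : q ^ k ≤ n := Nat.le_of_dvd (Nat.pos_of_ne_zero hn) hk
    calc k ≤ 2 ^ k := Nat.le_of_lt (Nat.lt_two_pow_self (n := k))
    _ ≤ q ^ k := Nat.pow_le_pow_left hq k
    _ ≤ n := hkn
  constructor
  · have : sSup {k : ℕ | q ^ k ∣ n} ∈ {k : ℕ | q ^ k ∣ n} := Nat.sSup_mem ⟨0, by simp⟩ hb
    rw [vq, if_neg hn]; exact this
  · intro hdvd
    have h1 : vq q n + 1 ≤ vq q n := by
      conv_rhs => rw [vq, if_neg hn]
      exact le_csSup hb hdvd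
    omega

lemma vq_mul_q (hq : 2 ≤ q) {n : ℕ} (hn : n ≠ 0) : vq q (q * n) = vq q n + 1 := by
  have hq0 : q ≠ 0 := by omega
  obtain ⟨h1, h2⟩ := vq_spec hq hn
  apply vq_unique hq (Nat.mul_ne_zero hq0 hn)
  · rw [pow_succ']
    exact mul_dvd_mul_left q h1
  · intro hdvd
    rw [pow_succ'] at hdvd
    exact h2 ((mul_dvd_mul_iff_left hq0).mp hdvd)

lemma wq_succ (n : ℕ) : wq q (n+1) = wq q n + vq q (n+1) := by
  rw [wq, wq, Finset.sum_range_succ]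

lemma uq_succ (n : ℕ) : uq q (n+1) = uq q n + wq q (n+1) := by
  rw [uq, uq, Finset.sum_range_succ]

lemma wq_base (hq : 2 ≤ q) {r : ℕ} (hr : r < q) : wq q r = 0 := by
  rw [wq]
  apply Finset.sum_eq_zero
  intro i hi
  simp only [Finset.mem_range] at hi
  rcases Nat.eq_zero_or_pos i with h | h
  · simp [vq, h]
  · apply vq_zero_of_not_dvd hq (by omega)
    intro hdvd
    have := Nat.le_of_dvd h hdvd
    omega

lemma wq_add (n t : ℕ) : wq q (n + t) = wq q n + ∑ i ∈ Finset.range t, vq q (n + 1 + i) := by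
  rw [wq, wq, show n + t + 1 = (n+1) + t by ring, Finset.sum_range_add]

lemma wq_step (hq : 2 ≤ q) (m r : ℕ) (hr : r < q) : wq q (q * m + r) = wq q m + m := by
  induction m with
  | zero =>
    rw [show q*0+r = r by omega, wq_base hq hr, wq_base hq (show 0 < q by omega)]
  | succ m ih =>
    have key : ∑ i ∈ Finset.range q, vq q (q * m + r + 1 + i) = vq q (m+1) + 1 := by
      have hqm : q * (m+1) = q * m + r + 1 + (q - r - 1) := by
        have h : q * (m+1) = q*m + q := by ring
        omega
      rw [Finset.sum_eq_single (q - r - 1)]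
      · rw [← hqm, vq_mul_q hq (by omega)]
      · intro i hi hne
        simp only [Finset.mem_range] at hi
        apply vq_zero_of_not_dvd hq (by omega)
        rintro ⟨t, ht⟩
        have h1 : q * m < q * t := by omega
        have h2 : q * t < q * (m + 2) := by
          have h3 : q * (m+2) = q * m + q + q := by ring
          omega
        have hm1 : m < t := Nat.lt_of_mul_lt_mul_left h1
        have hm2 : t < m + 2 := Nat.lt_of_mul_lt_mul_left h2
        have ht' : t = m + 1 := by omega
        subst ht'
        omega
      · intro h
        simp only [Finset.mem_range] at h
        omega
    have hstep : q * (m+1) + r = (q * m + r) + q := by ring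
    rw [hstep, wq_add, key, ih, wq_succ]
    ring
end aux

noncomputable def Tn (n : ℕ) : ℕ := n * (n + 1) / 2

lemma Tn_two (n : ℕ) : 2 * Tn n = n * (n+1) := by
  rw [Tn]
  exact Nat.mul_div_cancel' (Nat.even_mul_succ_self n).two_dvd

lemma Tn_succ (n : ℕ) : Tn (n+1) = Tn n + (n+1) := by
  have h1 := Tn_two n
  have h2 := Tn_two (n+1)
  nlinarith [h1, h2]

noncomputable def betaN (q : ℕ) : ℕ := (q * q - q) / 2

lemma betaN_two {q : ℕ} (hq : 1 ≤ q) : 2 * betaN q = q * q - q := by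
  rw [betaN]
  refine Nat.mul_div_cancel' ?_
  have : q * q - q = q * (q - 1) := by
    rw [Nat.mul_sub]
    omega
  rw [this]
  rcases Nat.even_or_odd q with h | h
  · exact Dvd.dvd.mul_right h.two_dvd _
  · exact Dvd.dvd.mul_left (Nat.Odd.sub_odd h odd_one).two_dvd _

lemma Tn_step {q : ℕ} (hq : 2 ≤ q) (m r : ℕ) :
    (Tn (q*m+r) : ℤ) + betaN q * m = q*q*(Tn m) + q*r*m + Tn r := by
  have hb : (2 * betaN q : ℤ) = q*q - q := by
    have h := betaN_two (by omega : 1 ≤ q)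
    have hle : q ≤ q * q := Nat.le_mul_of_pos_left q (by omega)
    zify [hle] at h
    linarith
  have h1 : (2 * Tn (q*m+r) : ℤ) = (q*m+r) * (q*m+r+1) := by exact_mod_cast Tn_two (q*m+r)
  have h2 : (2 * Tn m : ℤ) = m * (m+1) := by exact_mod_cast Tn_two m
  have h3 : (2 * Tn r : ℤ) = r * (r+1) := by exact_mod_cast Tn_two r
  have key : (2:ℤ) * ((Tn (q*m+r) : ℤ) + betaN q * m) = 2 * ((q:ℤ)*q*(Tn m) + q*r*m + Tn r) := by
    have expand : (2:ℤ) * ((Tn (q*m+r) : ℤ) + betaN q * m)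
        = 2 * Tn (q*m+r) + (2 * betaN q) * m := by ring
    rw [expand, h1, hb]
    have expand2 : (2:ℤ) * ((q:ℤ)*q*(Tn m) + q*r*m + Tn r)
        = (q:ℤ)*q*(2*Tn m) + 2*(q*r*m) + 2 * Tn r := by ring
    rw [expand2, h2, h3]
    ring
  exact mul_left_cancel₀ (two_ne_zero) key

section aux2
variable {q : ℕ}

lemma uq_base (hq : 2 ≤ q) {r : ℕ} (hr : r < q) : uq q r = 0 := by
  rw [uq]
  apply Finset.sum_eq_zero
  intro i hi
  simp only [Finset.mem_range] at hi
  exact wq_base hq (by omega)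

lemma uq_add (n t : ℕ) : uq q (n + t) = uq q n + ∑ i ∈ Finset.range t, wq q (n + 1 + i) := by
  rw [uq, uq, show n + t + 1 = (n+1) + t by ring, Finset.sum_range_add]

lemma uq_window_sum (hq : 2 ≤ q) (m r : ℕ) (hr : r < q) :
    ∑ i ∈ Finset.range q, wq q (q * m + r + 1 + i)
      = (q - r - 1) * (wq q m + m) + (r + 1) * (wq q (m+1) + (m+1)) := by
  have hsplit : q = (q - r - 1) + (r + 1) := by omega
  rw [show (Finset.range q) = Finset.range ((q - r - 1) + (r + 1)) by rw [← hsplit]]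
  rw [Finset.sum_range_add]
  congr 1
  · rw [Finset.sum_congr rfl (fun i hi => ?_), Finset.sum_const, Finset.card_range, smul_eq_mul]
    simp only [Finset.mem_range] at hi
    rw [show q * m + r + 1 + i = q * m + (r + 1 + i) by ring]
    exact wq_step hq m (r+1+i) (by omega)
  · rw [Finset.sum_congr rfl (fun i hi => ?_), Finset.sum_const, Finset.card_range, smul_eq_mul]
    simp only [Finset.mem_range] at hi
    have hmul : q * (m+1) = q * m + q := by ring
    rw [show q * m + r + 1 + (q - r - 1 + i) = q * (m+1) + i by omega]
    exact wq_step hq (m+1) i (by omega)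

lemma uq_step (hq : 2 ≤ q) (m r : ℕ) (hr : r < q) :
    (uq q (q*m+r) : ℤ) = q * uq q m + ((r:ℤ)+1-q) * wq q m + q * Tn m + ((r:ℤ)+1-q) * m := by
  induction m with
  | zero =>
    rw [show q*0+r = r by omega, uq_base hq hr]
    simp [uq, wq, vq, Tn]
  | succ m ih =>
    have hstep : q * (m+1) + r = (q * m + r) + q := by ring
    rw [hstep, uq_add, uq_window_sum hq m r hr]
    have hcast : ((q - r - 1 : ℕ) : ℤ) = (q:ℤ) - r - 1 := by omega
    push_cast [hcast]
    rw [ih]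
    have h1 : (uq q (m+1) : ℤ) = uq q m + wq q (m+1) := by exact_mod_cast uq_succ m
    have h2 : (wq q (m+1) : ℤ) = wq q m + vq q (m+1) := by exact_mod_cast wq_succ m
    have h3 : (Tn (m+1) : ℤ) = Tn m + (m+1) := by exact_mod_cast Tn_succ m
    rw [h1, h2, h3]
    ring
end aux2

section state
variable (q d : ℕ) [NeZero d]

noncomputable def Xst (n : ℕ) : ZMod d × ZMod d × ZMod d × ZMod d :=
  ((uq q n : ZMod d), (wq q n : ZMod d), (Tn n : ZMod d), (n : ZMod d))

noncomputable def phi (r : ℕ) :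
    (ZMod d × ZMod d × ZMod d × ZMod d) → (ZMod d × ZMod d × ZMod d × ZMod d) :=
  fun p =>
    ((q:ZMod d) * p.1 + ((r:ZMod d) + 1 - q) * p.2.1 + q * p.2.2.1 + ((r:ZMod d) + 1 - q) * p.2.2.2,
     p.2.1 + p.2.2.2,
     (q:ZMod d) * q * p.2.2.1 + (q:ZMod d) * r * p.2.2.2 + (Tn r : ZMod d)
       - (betaN q : ZMod d) * p.2.2.2,
     (q:ZMod d) * p.2.2.2 + r)

lemma Xst_step (hq : 2 ≤ q) (m r : ℕ) (hr : r < q) :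
    Xst q d (q*m+r) = phi q d r (Xst q d m) := by
  have hu := uq_step (q := q) hq m r hr
  have hw := wq_step (q := q) hq m r hr
  have ht := Tn_step (q := q) hq m r
  have cast_of_int : ∀ a b : ℤ, a = b → ((a : ZMod d) = (b : ZMod d)) := by
    intro a b h; rw [h]
  have hu' := cast_of_int _ _ hu
  have ht' := cast_of_int _ _ ht
  simp only [Xst, phi, Prod.mk.injEq]
  refine ⟨?_, ?_, ?_, ?_⟩
  · push_cast at hu' ⊢
    linear_combination hu'
  · have : ((wq q (q*m+r) : ℕ) : ZMod d) = ((wq q m + m : ℕ) : ZMod d) := by rw [hw]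
    push_cast at this ⊢
    exact this
  · push_cast at ht' ⊢
    linear_combination ht'
  · push_cast
    ring
end state

section counting
variable (q d : ℕ) [NeZero d]

lemma sum_range_mul {M : Type*} [AddCommMonoid M] (A : ℕ) (f : ℕ → M) :
    ∑ i ∈ Finset.range (q*A), f i = ∑ r ∈ Finset.range q, ∑ m ∈ Finset.range A, f (q*m+r) := by
  induction A with
  | zero => simp
  | succ A ih =>
    rw [Nat.mul_succ, Finset.sum_range_add, ih]
    rw [Finset.sum_congr rfl (fun r hr => Finset.sum_range_succ (fun m => f (q*m+r)) A)]
    rw [Finset.sum_add_distrib]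

lemma card_filter_comp (A : ℕ) (Pred : (ZMod d × ZMod d × ZMod d × ZMod d) → Prop)
    [DecidablePred Pred] :
    ((Finset.range A).filter (fun n => Pred (Xst q d n))).card
      = ∑ v ∈ Finset.univ.filter Pred, ((Finset.range A).filter (fun n => Xst q d n = v)).card := by
  rw [Finset.card_eq_sum_card_fiberwise
    (f := Xst q d) (t := Finset.univ.filter Pred)
    (by intro x hx; simp only [Finset.mem_coe, Finset.mem_filter] at hx ⊢; exact ⟨Finset.mem_univ _, hx.2⟩)]
  apply Finset.sum_congr rfl
  intro v hv
  simp only [Finset.mem_filter] at hv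
  congr 1
  rw [Finset.filter_filter]
  apply Finset.filter_congr
  intro n hn
  constructor
  · exact fun h => h.2
  · intro h; exact ⟨by rw [h]; exact hv.2, h⟩

noncomputable def gq (K : ℕ) : (ZMod d × ZMod d × ZMod d × ZMod d) → ℚ := fun v =>
  (((Finset.range (q^K)).filter (fun n => Xst q d n = v)).card : ℚ) / q^K

noncomputable def Pmat :
    ((ZMod d × ZMod d × ZMod d × ZMod d) → ℚ) →ₗ[ℚ] ((ZMod d × ZMod d × ZMod d × ZMod d) → ℚ) where
  toFun g := fun v => (q:ℚ)⁻¹ *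
    ∑ r ∈ Finset.range q, ∑ u ∈ Finset.univ.filter (fun u => phi q d r u = v), g u
  map_add' g h := by
    funext v
    simp only [Finset.sum_add_distrib, Pi.add_apply]
    ring
  map_smul' c g := by
    funext v
    simp only [Pi.smul_apply, smul_eq_mul, RingHom.id_apply, ← Finset.mul_sum]
    ring

lemma gq_succ (hq : 2 ≤ q) (K : ℕ) : gq q d (K+1) = Pmat q d (gq q d K) := by
  have hq0 : (0:ℚ) < (q:ℚ) := by positivity
  funext v
  have hcard : ((Finset.range (q^(K+1))).filter (fun n => Xst q d n = v)).card
      = ∑ r ∈ Finset.range q,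
          ((Finset.range (q^K)).filter (fun m => phi q d r (Xst q d m) = v)).card := by
    rw [Finset.card_filter, pow_succ', sum_range_mul]
    apply Finset.sum_congr rfl
    intro r hr
    simp only [Finset.mem_range] at hr
    rw [Finset.card_filter]
    apply Finset.sum_congr rfl
    intro m hm
    rw [Xst_step q d hq m r hr]
  have hfib : ∀ r, ((Finset.range (q^K)).filter (fun m => phi q d r (Xst q d m) = v)).card
      = ∑ u ∈ Finset.univ.filter (fun u => phi q d r u = v),
          ((Finset.range (q^K)).filter (fun n => Xst q d n = u)).card := by
    intro r
    exact card_filter_comp q d (q^K) (fun u => phi q d r u = v)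
  show _ = (q:ℚ)⁻¹ * ∑ r ∈ Finset.range q, ∑ u ∈ Finset.univ.filter (fun u => phi q d r u = v),
      gq q d K u
  simp only [gq, hcard, hfib]
  push_cast
  rw [Finset.mul_sum, Finset.sum_div]
  apply Finset.sum_congr rfl
  intro r _
  rw [← Finset.sum_div, pow_succ]
  have hqK : ((q:ℚ))^K ≠ 0 := by positivity
  ring
end counting

section la
variable (q d : ℕ) [NeZero d]

noncomputable def Nrm (g : (ZMod d × ZMod d × ZMod d × ZMod d) → ℚ) : ℚ := ∑ v, |g v|

lemma Nrm_nonneg (g) : 0 ≤ Nrm d g := Finset.sum_nonneg (fun v _ => abs_nonneg _)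

lemma le_Nrm (g) (v) : |g v| ≤ Nrm d g :=
  Finset.single_le_sum (fun v _ => abs_nonneg (g v)) (Finset.mem_univ v)

lemma Nrm_P_le (hq : 2 ≤ q) (g) : Nrm d (Pmat q d g) ≤ Nrm d g := by
  have hq0 : (0:ℚ) < (q:ℚ) := by positivity
  have h1 : ∀ v, |Pmat q d g v| ≤ (q:ℚ)⁻¹ * ∑ r ∈ Finset.range q,
      ∑ u ∈ Finset.univ.filter (fun u => phi q d r u = v), |g u| := by
    intro v
    show |(q:ℚ)⁻¹ * _| ≤ _
    rw [abs_mul, abs_of_nonneg (by positivity : (0:ℚ) ≤ (q:ℚ)⁻¹)]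
    gcongr
    calc |∑ r ∈ Finset.range q, ∑ u ∈ Finset.univ.filter (fun u => phi q d r u = v), g u|
        ≤ ∑ r ∈ Finset.range q, |∑ u ∈ Finset.univ.filter (fun u => phi q d r u = v), g u| :=
          Finset.abs_sum_le_sum_abs _ _
      _ ≤ ∑ r ∈ Finset.range q, ∑ u ∈ Finset.univ.filter (fun u => phi q d r u = v), |g u| := by
          gcongr with r hr
          exact Finset.abs_sum_le_sum_abs _ _
  have inner : ∀ r, (∑ v, ∑ u ∈ Finset.univ.filter (fun u => phi q d r u = v), |g u|)
      = Nrm d g := by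
    intro r
    rw [Nrm]
    exact Finset.sum_fiberwise_of_maps_to (fun u _ => Finset.mem_univ _) _
  calc Nrm d (Pmat q d g)
      ≤ ∑ v, (q:ℚ)⁻¹ * ∑ r ∈ Finset.range q,
          ∑ u ∈ Finset.univ.filter (fun u => phi q d r u = v), |g u| :=
        Finset.sum_le_sum (fun v _ => h1 v)
    _ = (q:ℚ)⁻¹ * ∑ r ∈ Finset.range q, ∑ v,
          ∑ u ∈ Finset.univ.filter (fun u => phi q d r u = v), |g u| := by
        rw [← Finset.mul_sum, Finset.sum_comm]
    _ = (q:ℚ)⁻¹ * ((q:ℚ) * Nrm d g) := by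
        rw [Finset.sum_congr rfl (fun r _ => inner r), Finset.sum_const, Finset.card_range,
          nsmul_eq_mul]
    _ = Nrm d g := by
        rw [← mul_assoc, inv_mul_cancel₀ (ne_of_gt hq0), one_mul]

lemma Nrm_pow_le (hq : 2 ≤ q) (K : ℕ) : ∀ g, Nrm d ((Pmat q d ^ K) g) ≤ Nrm d g := by
  induction K with
  | zero => intro g; simp
  | succ K ih =>
    intro g
    rw [pow_succ, Module.End.mul_apply]
    exact le_trans (ih _) (Nrm_P_le q d hq g)
end la

section decomp
variable (q d : ℕ) [NeZero d]

lemma ker_range_disjoint (hq : 2 ≤ q) (y : (ZMod d × ZMod d × ZMod d × ZMod d) → ℚ)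
    (h1 : y ∈ LinearMap.ker (1 - Pmat q d)) (h2 : y ∈ LinearMap.range (1 - Pmat q d)) :
    y = 0 := by
  have hPy : Pmat q d y = y := by
    have h := LinearMap.mem_ker.mp h1
    rw [LinearMap.sub_apply, Module.End.one_apply] at h
    exact (sub_eq_zero.mp h).symm
  obtain ⟨x, hx⟩ := h2
  have hPx : Pmat q d x = x - y := by
    rw [LinearMap.sub_apply, Module.End.one_apply] at hx
    rw [← hx]
    abel
  have claim : ∀ K : ℕ, (Pmat q d ^ K) x = x - K • y := by
    intro K
    induction K with
    | zero => simp
    | succ K ih =>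
      rw [pow_succ', Module.End.mul_apply, ih, map_sub, map_nsmul, hPy, hPx, succ_nsmul]
      abel
  have hbd : ∀ (K : ℕ) (v), (K:ℚ) * |y v| ≤ |x v| + Nrm d x := by
    intro K v
    have h1' : |((Pmat q d ^ K) x) v| ≤ Nrm d x := (le_Nrm d _ v).trans (Nrm_pow_le q d hq K x)
    rw [claim K] at h1'
    have h2' : ((x - K • y) v) = x v - (K:ℚ) * y v := by
      simp [nsmul_eq_mul]
    rw [h2'] at h1'
    have h3' : |(K:ℚ) * y v| - |x v| ≤ |x v - (K:ℚ) * y v| := by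
      rw [abs_sub_comm]
      exact abs_sub_abs_le_abs_sub _ _
    rw [abs_mul, abs_of_nonneg (by positivity : (0:ℚ) ≤ (K:ℚ))] at h3'
    linarith
  funext v
  show y v = 0
  by_contra hy
  have hy' : 0 < |y v| := abs_pos.mpr hy
  obtain ⟨K, hK⟩ := exists_nat_gt ((|x v| + Nrm d x) / |y v|)
  have := (div_lt_iff₀ hy').mp hK
  have h4 := hbd K v
  linarith

lemma exists_decomp (hq : 2 ≤ q) (g : (ZMod d × ZMod d × ZMod d × ZMod d) → ℚ) :
    ∃ k z, Pmat q d k = k ∧ g = k + z - Pmat q d z := by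
  set f := (1 : ((ZMod d × ZMod d × ZMod d × ZMod d) → ℚ) →ₗ[ℚ]
    ((ZMod d × ZMod d × ZMod d × ZMod d) → ℚ)) - Pmat q d with hf
  have hdisj : LinearMap.ker f ⊓ LinearMap.range f = ⊥ := by
    rw [eq_bot_iff]
    rintro y hy
    rw [Submodule.mem_inf] at hy
    rw [Submodule.mem_bot]
    exact ker_range_disjoint q d hq y hy.1 hy.2
  have htop : LinearMap.ker f ⊔ LinearMap.range f = ⊤ := by
    apply Submodule.eq_top_of_finrank_eq
    have h1 := LinearMap.finrank_range_add_finrank_ker f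
    have h2 := Submodule.finrank_sup_add_finrank_inf_eq (LinearMap.ker f) (LinearMap.range f)
    rw [hdisj] at h2
    rw [finrank_bot] at h2
    omega
  have hg : g ∈ LinearMap.ker f ⊔ LinearMap.range f := by rw [htop]; exact Submodule.mem_top
  obtain ⟨k, hk, rr, hrr, hsum⟩ := Submodule.mem_sup.mp hg
  obtain ⟨z, hz⟩ := hrr
  refine ⟨k, z, ?_, ?_⟩
  · have h := LinearMap.mem_ker.mp hk
    rw [hf, LinearMap.sub_apply, Module.End.one_apply] at h
    exact (sub_eq_zero.mp h).symm
  · rw [← hsum, ← hz, hf, LinearMap.sub_apply, Module.End.one_apply]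
    abel
end decomp


theorem stmt_6 (q d : ℕ) (hq : 2 ≤ q) (hd : 2 ≤ d)
    (delta : ℤ → ℤ → ℤ → ℤ → ℤ → ℝ)
    (hdelta : ∀ tu tw t2 t1 t0 : ℤ,
      Tendsto (fun N : ℕ => (gamma q d tu tw t2 t1 t0 N : ℝ) / N) atTop
        (nhds (delta tu tw t2 t1 t0)))
    (tu tw t2 t1 t0 : ℤ) :
    ∃ r : ℚ, delta tu tw t2 t1 t0 = (r : ℝ) := by
  classical
  haveI : NeZero d := ⟨by omega⟩
  set Pred : (ZMod d × ZMod d × ZMod d × ZMod d) → Prop := fun p =>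
    (tu : ZMod d) * p.1 + (tw : ZMod d) * p.2.1 + (t2 : ZMod d) * p.2.2.1
      + (t1 : ZMod d) * p.2.2.2 + (t0 : ZMod d) = 0 with hPred
  set W : Finset (ZMod d × ZMod d × ZMod d × ZMod d) := Finset.univ.filter Pred with hW
  -- gamma in terms of fibers
  have gamma_eq : ∀ A : ℕ, (gamma q d tu tw t2 t1 t0 A : ℚ)
      = ∑ v ∈ W, (((Finset.range A).filter (fun n => Xst q d n = v)).card : ℚ) := by
    intro A
    have hpred : ∀ n : ℕ,
        ((tu * uq q n + tw * wq q n + t2 * (n * (n + 1) / 2 : ℕ) + t1 * n + t0) % (d : ℤ) = 0)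
          ↔ Pred (Xst q d n) := by
      intro n
      have hdvd : ((tu * uq q n + tw * wq q n + t2 * (n * (n + 1) / 2 : ℕ) + t1 * n + t0)
          % (d : ℤ) = 0) ↔ (d:ℤ) ∣ (tu * uq q n + tw * wq q n
          + t2 * (n * (n + 1) / 2 : ℕ) + t1 * n + t0) :=
        ⟨Int.dvd_of_emod_eq_zero, Int.emod_eq_zero_of_dvd⟩
      rw [hdvd, ← ZMod.intCast_zmod_eq_zero_iff_dvd]
      have hcast : (((tu * uq q n + tw * wq q n + t2 * (n * (n + 1) / 2 : ℕ) + t1 * n + t0) : ℤ)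
          : ZMod d) = (tu : ZMod d) * ((uq q n : ℕ) : ZMod d)
            + (tw : ZMod d) * ((wq q n : ℕ) : ZMod d)
            + (t2 : ZMod d) * ((Tn n : ℕ) : ZMod d)
            + (t1 : ZMod d) * ((n : ℕ) : ZMod d) + (t0 : ZMod d) := by
        have hT : ((n * (n+1) / 2 : ℕ) : ℤ) = ((Tn n : ℕ) : ℤ) := rfl
        rw [hT]
        push_cast
        ring
      rw [hcast]
      simp only [hPred, Xst]
    have hfilter : (Finset.range A).filter (fun n =>
        (tu * uq q n + tw * wq q n + t2 * (n * (n + 1) / 2 : ℕ) + t1 * n + t0) % (d : ℤ) = 0)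
        = (Finset.range A).filter (fun n => Pred (Xst q d n)) :=
      Finset.filter_congr (fun n _ => hpred n)
    rw [gamma, hfilter, card_filter_comp q d A Pred]
    push_cast
    rfl
  -- decomposition
  obtain ⟨k, z, hk, hgz⟩ := exists_decomp q d hq (gq q d 0)
  set b : ℕ → ℚ := fun K => ∑ v ∈ W, ((Pmat q d ^ K) z) v with hb
  set c : ℚ := ∑ v ∈ W, k v with hc
  have hgq0 : ∀ K, gq q d K = (Pmat q d ^ K) (gq q d 0) := by
    intro K
    induction K with
    | zero => simp
    | succ K ih => rw [gq_succ q d hq K, ih, ← Module.End.mul_apply, ← pow_succ']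
  have hPk : ∀ K : ℕ, (Pmat q d ^ K) k = k := by
    intro K
    induction K with
    | zero => simp
    | succ K ih => rw [pow_succ', Module.End.mul_apply, ih, hk]
  have hgqK : ∀ K, gq q d K = k + (Pmat q d ^ K) z - (Pmat q d ^ (K+1)) z := by
    intro K
    rw [hgq0 K, hgz]
    rw [map_sub, map_add, hPk K]
    rw [← Module.End.mul_apply (Pmat q d ^ K) (Pmat q d), ← pow_succ]
  have haK : ∀ K : ℕ, (gamma q d tu tw t2 t1 t0 (q^K) : ℚ) / (q:ℚ)^K = c + b K - b (K+1) := by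
    intro K
    rw [gamma_eq (q^K), Finset.sum_div]
    have : ∀ v ∈ W, (((Finset.range (q^K)).filter (fun n => Xst q d n = v)).card : ℚ) / (q:ℚ)^K
        = gq q d K v := by
      intro v _
      simp only [gq]
    rw [Finset.sum_congr rfl this]
    rw [Finset.sum_congr rfl (fun v _ => by rw [hgqK K])]
    simp only [Pi.add_apply, Pi.sub_apply]
    rw [Finset.sum_sub_distrib, Finset.sum_add_distrib]
  have hbound : ∀ K, |b K| ≤ Nrm d z := by
    intro K
    calc |b K| ≤ ∑ v ∈ W, |((Pmat q d ^ K) z) v| := Finset.abs_sum_le_sum_abs _ _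
      _ ≤ ∑ v, |((Pmat q d ^ K) z) v| :=
          Finset.sum_le_sum_of_subset_of_nonneg (Finset.subset_univ W)
            (fun v _ _ => abs_nonneg _)
      _ ≤ Nrm d z := Nrm_pow_le q d hq K z
  -- analysis
  set δ := delta tu tw t2 t1 t0 with hδ
  have hpow : Tendsto (fun K : ℕ => q ^ K) atTop atTop :=
    tendsto_pow_atTop_atTop_of_one_lt (by omega)
  have h1 : Tendsto (fun K : ℕ => (gamma q d tu tw t2 t1 t0 (q^K) : ℝ) / ((q^K : ℕ) : ℝ))
      atTop (nhds δ) := (hdelta tu tw t2 t1 t0).comp hpow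
  have h2 : Tendsto (fun K : ℕ => ((c + b K - b (K+1) : ℚ) : ℝ)) atTop (nhds δ) := by
    apply h1.congr
    intro K
    have := haK K
    have hcast : ((((gamma q d tu tw t2 t1 t0 (q^K) : ℚ) / (q:ℚ)^K) : ℚ) : ℝ)
        = (gamma q d tu tw t2 t1 t0 (q^K) : ℝ) / ((q^K : ℕ) : ℝ) := by
      push_cast
      ring
    rw [← hcast, this]
  have hb' : Tendsto (fun K : ℕ => ((b K : ℝ) - (b (K+1) : ℝ))) atTop (nhds (δ - c)) := by
    have h3 := h2.sub (tendsto_const_nhds (x := (c:ℝ)) (f := atTop))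
    apply h3.congr
    intro K
    push_cast
    ring
  have hces := hb'.cesaro
  have htel : ∀ n : ℕ, (n:ℝ)⁻¹ * ∑ i ∈ Finset.range n, ((b i : ℝ) - (b (i+1) : ℝ))
      = (n:ℝ)⁻¹ * ((b 0 : ℝ) - (b n : ℝ)) := by
    intro n
    rw [Finset.sum_range_sub' (fun i => (b i : ℝ)) n]
  rw [show (fun n : ℕ => (n:ℝ)⁻¹ * ∑ i ∈ Finset.range n, ((b i : ℝ) - (b (i+1) : ℝ)))
      = (fun n : ℕ => (n:ℝ)⁻¹ * ((b 0 : ℝ) - (b n : ℝ))) from funext htel] at hces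
  have hzero : Tendsto (fun n : ℕ => (n:ℝ)⁻¹ * ((b 0 : ℝ) - (b n : ℝ))) atTop (nhds 0) := by
    apply squeeze_zero_norm (a := fun n : ℕ => ((|b 0| + Nrm d z : ℚ) : ℝ) / n)
    · intro n
      rw [Real.norm_eq_abs, abs_mul, abs_inv, Nat.abs_cast]
      rw [div_eq_inv_mul]
      rcases Nat.eq_zero_or_pos n with h | h
      · simp [h]
      · apply mul_le_mul_of_nonneg_left _ (by positivity)
        have hb0 : |(b n : ℝ)| ≤ ((Nrm d z : ℚ) : ℝ) := by
          exact_mod_cast (by exact_mod_cast hbound n : |(b n : ℝ)| ≤ ((Nrm d z : ℚ) : ℝ))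
        calc |(b 0 : ℝ) - (b n : ℝ)| ≤ |(b 0 : ℝ)| + |(b n : ℝ)| := abs_sub _ _
          _ ≤ ((|b 0| + Nrm d z : ℚ) : ℝ) := by
              push_cast
              have : |((b 0 : ℚ) : ℝ)| = ((|b 0| : ℚ) : ℝ) := by push_cast; ring
              rw [this] at *
              linarith [hb0]
    · exact tendsto_const_div_atTop_nhds_zero_nat _
  have hfinal : δ - (c : ℝ) = 0 := tendsto_nhds_unique hces hzero
  exact ⟨c, by linarith⟩
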